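/- Let A be an n×n real matrix with rank A = n−1, let i ≠ j be indices, and let x ∈ ker Aᵀ satisfy x_i = −1 and x_j ≠ −1. Then R_i + R_j ∉ span{R_s : s ≠ i,j} and ker A = F_{i,j}(A)^⊥. -/

import Mathlib

open Matrix

/-- `𝒜_{n,d}`: 0/1 matrices with exactly `d` ones in every row and column. -/
def IsRegAdj (n d : ℕ) (A : Matrix (Fin n) (Fin n) ℝ) : Prop :=
  (∀ i j, A i j = 0 ∨ A i j = 1) ∧
  (∀ i, {j : Fin n | A i j = 1}.ncard = d) ∧
  (∀ j, {i : Fin n | A i j = 1}.ncard = d)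

/-- A simple switching can be performed in `(i, j, k, l)`. -/
def CanSwitch {n : ℕ} (A : Matrix (Fin n) (Fin n) ℝ) (i j k l : Fin n) : Prop :=
  A i k = 1 ∧ A j l = 1 ∧ A i l = 0 ∧ A j k = 0

/-- The matrix obtained from `A` by the simple switching in `(i, j, k, l)`. -/
def switch {n : ℕ} (A : Matrix (Fin n) (Fin n) ℝ) (i j k l : Fin n) :
    Matrix (Fin n) (Fin n) ℝ :=
  Matrix.of fun s t =>
    if (s = i ∧ t = k) ∨ (s = j ∧ t = l) then 0
    else if (s = i ∧ t = l) ∨ (s = j ∧ t = k) then 1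
    else A s t

/-- `F_{i,j}(A)`: the span of the rows of `A` other than the `i`-th and the `j`-th,
together with `R_i + R_j`. -/
def rowSpanF {n : ℕ} (A : Matrix (Fin n) (Fin n) ℝ) (i j : Fin n) :
    Submodule ℝ (Fin n → ℝ) :=
  Submodule.span ℝ (insert (A i + A j) {r : Fin n → ℝ | ∃ s, s ≠ i ∧ s ≠ j ∧ r = A s})

/-- Orthogonal complement w.r.t. the standard inner product on `ℝⁿ`. -/
def perp {n : ℕ} (F : Submodule ℝ (Fin n → ℝ)) : Submodule ℝ (Fin n → ℝ) where
  carrier := {x | ∀ v ∈ F, v ⬝ᵥ x = 0}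
  zero_mem' := by intro v hv; simp
  add_mem' := by intro a b ha hb v hv; simp [dotProduct_add, ha v hv, hb v hv]
  smul_mem' := by intro c x hx v hv; simp [dotProduct_smul, hx v hv]

/-- `A` is `β`-delocalized: no level set of a nonzero null vector (of `A` or `Aᵀ`)
has more than `β` coordinates. -/
def Delocalized {n : ℕ} (β : ℝ) (A : Matrix (Fin n) (Fin n) ℝ) : Prop :=
  ∀ x : Fin n → ℝ, x ≠ 0 →
    (x ∈ LinearMap.ker A.mulVecLin ∨ x ∈ LinearMap.ker Aᵀ.mulVecLin) →
    ∀ lam : ℝ, ({i : Fin n | x i = lam}.ncard : ℝ) ≤ β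

/-- for a matrix of corank one, if `x ∈ ker Aᵀ` with `x_i = -1` and
`x_j ≠ -1`, then `R_i + R_j` is outside the span of the remaining rows and
`ker A = F_{i,j}(A)^⊥`. -/
theorem stmt_17 (n : ℕ) (A : Matrix (Fin n) (Fin n) ℝ) (hrk : A.rank = n - 1)
    (i j : Fin n) (hij : i ≠ j)
    (x : Fin n → ℝ) (hx : x ∈ LinearMap.ker Aᵀ.mulVecLin) (hxi : x i = -1)
    (hxj : x j ≠ -1) :
    A i + A j ∉ Submodule.span ℝ {r : Fin n → ℝ | ∃ s, s ≠ i ∧ s ≠ j ∧ r = A s} ∧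
    LinearMap.ker A.mulVecLin = perp (rowSpanF A i j) := by
  classical
  set V : Submodule ℝ (Fin n → ℝ) :=
    Submodule.span ℝ {r : Fin n → ℝ | ∃ s, s ≠ i ∧ s ≠ j ∧ r = A s} with hV
  have hn2 : 2 ≤ n := by
    have : Nontrivial (Fin n) := ⟨i, j, hij⟩
    have h := Fintype.one_lt_card (α := Fin n)
    simp only [Fintype.card_fin] at h
    omega
  -- the row relation
  have hsum : ∑ s, x s • A s = 0 := by
    have h0 : Aᵀ.mulVec x = 0 := LinearMap.mem_ker.mp hx
    funext t
    have := congrFun h0 t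
    simpa [Matrix.mulVec, dotProduct, Finset.sum_apply, mul_comm] using this
  set T : Finset (Fin n) := (Finset.univ.erase i).erase j with hT
  set v : Fin n → ℝ := ∑ s ∈ T, x s • A s with hv
  have hjmem : j ∈ Finset.univ.erase i := Finset.mem_erase.mpr ⟨hij.symm, Finset.mem_univ j⟩
  have hsplit : x i • A i + (x j • A j + v) = 0 := by
    rw [hv, hT, Finset.add_sum_erase _ (fun s => x s • A s) hjmem,
      Finset.add_sum_erase _ (fun s => x s • A s) (Finset.mem_univ i)]
    exact hsum
  have hAi : A i = x j • A j + v := by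
    have h := hsplit
    rw [hxi, neg_one_smul] at h
    rw [neg_add_eq_zero] at h
    exact h
  have hvV : v ∈ V := by
    refine Submodule.sum_mem _ fun s hs => ?_
    have hs' := Finset.mem_erase.mp hs
    have hs'' := Finset.mem_erase.mp hs'.2
    exact Submodule.smul_mem _ _ (Submodule.subset_span ⟨s, hs''.1, hs'.1, rfl⟩)
  have hxj1 : x j + 1 ≠ 0 := fun h => hxj (by linarith)
  -- key: if A i + A j ∈ some submodule W containing V, then A j and A i ∈ W
  have key : ∀ W : Submodule ℝ (Fin n → ℝ), V ≤ W → A i + A j ∈ W → A j ∈ W ∧ A i ∈ W := by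
    intro W hVW hmem
    have h3 : (x j + 1) • A j = (A i + A j) - v := by
      rw [hAi]; module
    have h4 : (x j + 1) • A j ∈ W := h3 ▸ Submodule.sub_mem _ hmem (hVW hvV)
    have h5 : A j ∈ W := by
      have := Submodule.smul_mem W (x j + 1)⁻¹ h4
      rwa [smul_smul, inv_mul_cancel₀ hxj1, one_smul] at this
    refine ⟨h5, ?_⟩
    have : A i = (A i + A j) - A j := by abel
    rw [this]; exact Submodule.sub_mem _ hmem h5
  constructor
  · intro hmem
    obtain ⟨hRj, hRi⟩ := key V le_rfl hmem
    have hall : ∀ s, A s ∈ V := by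
      intro s
      by_cases hsi : s = i
      · subst hsi; exact hRi
      by_cases hsj : s = j
      · subst hsj; exact hRj
      · exact Submodule.subset_span ⟨s, hsi, hsj, rfl⟩
    have hWV : Submodule.span ℝ (Set.range A) ≤ V :=
      Submodule.span_le.mpr (by rintro _ ⟨s, rfl⟩; exact hall s)
    have hset : {r : Fin n → ℝ | ∃ s, s ≠ i ∧ s ≠ j ∧ r = A s} = ↑(T.image fun s => A s) := by
      ext r
      simp only [Set.mem_setOf_eq, Finset.coe_image, Set.mem_image, Finset.mem_coe, hT,
        Finset.mem_image, Finset.mem_erase, Finset.mem_univ, and_true]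
      constructor
      · rintro ⟨s, h1, h2, rfl⟩; exact ⟨s, ⟨h2, h1⟩, rfl⟩
      · rintro ⟨s, ⟨h2, h1⟩, rfl⟩; exact ⟨s, h1, h2, rfl⟩
    have hfr : Module.finrank ℝ V ≤ n - 2 := by
      rw [hV, hset]
      refine (finrank_span_finset_le_card _).trans ?_
      refine (Finset.card_image_le).trans ?_
      rw [hT, Finset.card_erase_of_mem hjmem, Finset.card_erase_of_mem (Finset.mem_univ i),
        Finset.card_univ, Fintype.card_fin]
      omega
    have hr : A.rank ≤ n - 2 := by
      rw [Matrix.rank_eq_finrank_span_row]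
      exact le_trans (Submodule.finrank_mono hWV) hfr
    rw [hrk] at hr
    omega
  · ext y
    simp only [LinearMap.mem_ker, Matrix.mulVecLin_apply]
    constructor
    · intro hy w hw
      have hrow : ∀ s, A s ⬝ᵥ y = 0 := fun s => congrFun hy s
      induction hw using Submodule.span_induction with
      | mem w hw =>
        rcases hw with h | ⟨s, _, _, rfl⟩
        · subst h; rw [add_dotProduct, hrow i, hrow j, add_zero]
        · exact hrow s
      | zero => simp
      | add a b _ _ ha hb => rw [add_dotProduct, ha, hb, add_zero]
      | smul c a _ ha => rw [smul_dotProduct, ha, smul_zero]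
    · intro hy
      have hVF : V ≤ rowSpanF A i j :=
        Submodule.span_mono (Set.subset_insert _ _)
      have hsumF : A i + A j ∈ rowSpanF A i j :=
        Submodule.subset_span (Set.mem_insert _ _)
      obtain ⟨hRj, hRi⟩ := key _ hVF hsumF
      have hall : ∀ s, A s ∈ rowSpanF A i j := by
        intro s
        by_cases hsi : s = i
        · subst hsi; exact hRi
        by_cases hsj : s = j
        · subst hsj; exact hRj
        · exact hVF (Submodule.subset_span ⟨s, hsi, hsj, rfl⟩)
      funext s
      have := hy (A s) (hall s)
      simpa [Matrix.mulVec, dotProduct] using this
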